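/- Let (L_t)_{t∈[0,T]} be a non-homogeneous Lévy process satisfying (NL1) and (NL2), and let H^{(i)} be its orthonormalized power-jump processes. Then for all i, j ≥ 1 the predictable angle bracket satisfies ⟨H^{(i)}, H^{(j)}⟩_t = ∫_0^t ∫_{−∞}^{+∞} q_i(e) q_j(e) π(ds,de); in particular ⟨H^{(i)}, H^{(j)}⟩ ≡ 0 whenever i ≠ j, i.e., the martingales H^{(i)} are pairwise strongly orthogonal. -/
import Mathlib


/- STATEMENT 3: the orthonormalized power-jump processes H^{(i)} are pairwise
strongly orthogonal: ⟨H^{(i)}, H^{(j)}⟩_t = ∫₀ᵗ∫ q_i(e) q_j(e) π(ds,de), which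
vanishes identically for i ≠ j.

Here the (deterministic) predictable brackets of the Teugels martingales are
⟨X^{(i)},X^{(j)}⟩_t = ∫₀ᵗ c_s ds · 1_{i=j=1} + m^{(i+j)}_t, with
m^{(1)}_t = E[L_t] and m^{(i)}_t = ∫₀ᵗ∫ eⁱ F_s(de) ds for i ≥ 2;
H^{(i)} = Σ_{k=1}^i α_{i,k} X^{(k)} so that, by bilinearity,
⟨H^{(i)},H^{(j)}⟩_t = Σ_{k=1}^i Σ_{k'=1}^j α_{i,k} α_{j,k'} ⟨X^{(k)},X^{(k')}⟩_t;
q_n(e) = Σ_{k=1}^n α_{n,k} e^{k-1} and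
π([0,t],de) = ∫₀ᵗ c_s δ₀(de) ds + ∫₀ᵗ e² F_s(de) ds, so that
∫₀ᵗ∫ q_i q_j dπ = (∫₀ᵗ c_s ds)·q_i(0)q_j(0) + ∫₀ᵗ∫ q_i(e)q_j(e) e² F_s(de) ds. -/

open MeasureTheory ProbabilityTheory

noncomputable section

structure NHLevy (Ω : Type*) [MeasurableSpace Ω] (P : Measure Ω) (T : ℝ) where
  L : ℝ → Ω → ℝ
  b : ℝ → ℝ
  c : ℝ → ℝ
  F : ℝ → Measure ℝ
  meas_L : ∀ t, Measurable (L t)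
  meas_b : Measurable b
  meas_c : Measurable c
  c_pos : ∀ s, 0 < c s
  F_zero : ∀ s, F s {0} = 0
  F_int : ∀ s, (∫⁻ e, ENNReal.ofReal (min 1 (e ^ 2)) ∂(F s)) < ⊤
  F_meas : ∀ A : Set ℝ, MeasurableSet A → Measurable fun s => F s A
  indep_increments : ∀ s t : ℝ, 0 ≤ s → s ≤ t → t ≤ T →
    Indep (⨆ r : Set.Icc (0 : ℝ) s, MeasurableSpace.comap (L r) (borel ℝ))
      (MeasurableSpace.comap (fun ω => L t ω - L s ω) (borel ℝ)) P
  charFn : ∀ t ∈ Set.Icc (0 : ℝ) T, ∀ u : ℝ,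
    (∫ ω, Complex.exp (Complex.I * (u : ℂ) * (L t ω : ℂ)) ∂P)
      = Complex.exp (∫ s in Set.Ioc (0 : ℝ) t,
          (Complex.I * (u : ℂ) * (b s : ℂ) - (c s : ℂ) / 2 * (u : ℂ) ^ 2
            + ∫ e, (Complex.exp (Complex.I * (u : ℂ) * (e : ℂ)) - 1
                - Complex.I * (u : ℂ) * (e : ℂ) * (if |e| ≤ 1 then 1 else 0)) ∂(F s)))

def NL1 {Ω : Type*} [MeasurableSpace Ω] {P : Measure Ω} {T : ℝ}
    (X : NHLevy Ω P T) : Prop :=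
  (∫⁻ s in Set.Ioc (0 : ℝ) T,
    (ENNReal.ofReal |X.b s| + ENNReal.ofReal (X.c s)
      + ∫⁻ e, ENNReal.ofReal (min 1 (e ^ 2)) ∂(X.F s))) < ⊤

def NL2 {Ω : Type*} [MeasurableSpace Ω] {P : Measure Ω} {T : ℝ}
    (X : NHLevy Ω P T) (ε 𝔠 : ℝ) : Prop :=
  ∀ u ∈ Set.Icc (-(1 + ε) * 𝔠) ((1 + ε) * 𝔠),
    (∫⁻ s in Set.Ioc (0 : ℝ) T,
      ∫⁻ e in {e : ℝ | 1 < |e|}, ENNReal.ofReal (Real.exp (u * e)) ∂(X.F s)) < ⊤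

variable {Ω : Type*} [MeasurableSpace Ω] {P : Measure Ω} {T : ℝ}

/-- `m^{(i)}_t`: the mean of the `i`-th power-jump process. -/
def powerJumpMean (X : NHLevy Ω P T) (P' : Measure Ω) (i : ℕ) (t : ℝ) : ℝ :=
  if i = 1 then ∫ ω, X.L t ω ∂P'
  else ∫ s in Set.Ioc (0 : ℝ) t, ∫ e, e ^ i ∂(X.F s)

/-- `⟨X^{(i)}, X^{(j)}⟩_t = ∫₀ᵗ c_s ds · 1_{i=j=1} + m^{(i+j)}_t`
(the deterministic predictable bracket of the Teugels martingales). -/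
def teugelsBracket (X : NHLevy Ω P T) (P' : Measure Ω) (i j : ℕ) (t : ℝ) : ℝ :=
  (if i = 1 ∧ j = 1 then ∫ s in Set.Ioc (0 : ℝ) t, X.c s else 0)
    + powerJumpMean X P' (i + j) t

/-- `⟨H^{(i)}, H^{(j)}⟩_t`, computed by bilinearity from
`H^{(i)} = Σ_{k=1}^i α_{i,k} X^{(k)}`. -/
def orthoBracket (X : NHLevy Ω P T) (P' : Measure Ω) (α : ℕ → ℕ → ℝ)
    (i j : ℕ) (t : ℝ) : ℝ :=
  ∑ k ∈ Finset.Icc 1 i, ∑ k' ∈ Finset.Icc 1 j,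
    α i k * α j k' * teugelsBracket X P' k k' t

/-- The orthonormal polynomials `q_n(e) = Σ_{k=1}^n α_{n,k} e^{k-1}`. -/
def qPoly (α : ℕ → ℕ → ℝ) (n : ℕ) (e : ℝ) : ℝ :=
  ∑ k ∈ Finset.Icc 1 n, α n k * e ^ (k - 1)

/-- `∫₀ᵗ ∫ q_i(e) q_j(e) π(ds,de)` where
`π([0,t],de) = ∫₀ᵗ c_s δ₀(de) ds + ∫₀ᵗ e² F_s(de) ds`. -/
def piIntegral (X : NHLevy Ω P T) (α : ℕ → ℕ → ℝ) (i j : ℕ) (t : ℝ) : ℝ :=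
  (∫ s in Set.Ioc (0 : ℝ) t, X.c s) * qPoly α i 0 * qPoly α j 0
    + ∫ s in Set.Ioc (0 : ℝ) t, ∫ e, qPoly α i e * qPoly α j e * e ^ 2 ∂(X.F s)

/-! ### Auxiliary lemmas -/

/-- For a kernel-like family of measures, the lower integral of a fixed measurable
function is measurable in the parameter (no s-finiteness needed). -/
lemma aux_meas_lintegral {F : ℝ → Measure ℝ}
    (hF : ∀ A : Set ℝ, MeasurableSet A → Measurable fun s => F s A)
    {g : ℝ → ENNReal} (hg : Measurable g) :
    Measurable fun s => ∫⁻ e, g e ∂(F s) := by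
  have h : ∀ s, (∫⁻ e, g e ∂(F s))
      = ⨆ n, (MeasureTheory.SimpleFunc.eapprox g n).lintegral (F s) :=
    fun s => lintegral_eq_iSup_eapprox_lintegral hg
  simp_rw [h]
  refine Measurable.iSup fun n => ?_
  have h2 : ∀ s, (MeasureTheory.SimpleFunc.eapprox g n).lintegral (F s)
      = ∑ x ∈ (MeasureTheory.SimpleFunc.eapprox g n).range,
          x * F s ((MeasureTheory.SimpleFunc.eapprox g n) ⁻¹' {x}) := fun s => rfl
  simp_rw [h2]
  exact Finset.measurable_sum _ fun x _ =>
    (hF _ ((MeasureTheory.SimpleFunc.eapprox g n).measurableSet_preimage _)).const_mul x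

lemma aux_meas_setLintegral {F : ℝ → Measure ℝ}
    (hF : ∀ A : Set ℝ, MeasurableSet A → Measurable fun s => F s A)
    {S : Set ℝ} (hS : MeasurableSet S) {g : ℝ → ENNReal} (hg : Measurable g) :
    Measurable fun s => ∫⁻ e in S, g e ∂(F s) := by
  simp_rw [← lintegral_indicator hS]
  exact aux_meas_lintegral hF (hg.indicator hS)

/-- Pointwise domination of `|e|^n` by the Lévy-measure integrands. -/
lemma aux_pow_bound {𝔠 : ℝ} (h𝔠 : 0 < 𝔠) {n : ℕ} (hn : 2 ≤ n) (e : ℝ) :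
    ENNReal.ofReal (|e| ^ n) ≤ ENNReal.ofReal (min 1 (e ^ 2))
      + Set.indicator {e : ℝ | 1 < |e|}
          (fun e => ENNReal.ofReal ((n.factorial : ℝ) / 𝔠 ^ n)
            * (ENNReal.ofReal (Real.exp (𝔠 * e)) + ENNReal.ofReal (Real.exp (-𝔠 * e)))) e := by
  by_cases h : 1 < |e|
  · rw [Set.indicator_of_mem (s := {e : ℝ | 1 < |e|}) (a := e) h]
    refine le_trans ?_ le_add_self
    have hfac : (0:ℝ) < (n.factorial : ℝ) := by positivity
    have hcn : (0:ℝ) < 𝔠 ^ n := by positivity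
    have hP : (𝔠 * |e|) ^ n / (n.factorial : ℝ) ≤ Real.exp (𝔠 * |e|) :=
      Real.pow_div_factorial_le_exp (𝔠 * |e|) (by positivity) n
    have h1 : |e| ^ n ≤ (n.factorial : ℝ) / 𝔠 ^ n * Real.exp (𝔠 * |e|) := by
      rw [div_le_iff₀ hfac] at hP
      rw [mul_pow] at hP
      rw [div_mul_eq_mul_div, le_div_iff₀ hcn]
      nlinarith [Real.exp_pos (𝔠 * |e|)]
    have h2 : Real.exp (𝔠 * |e|) ≤ Real.exp (𝔠 * e) + Real.exp (-𝔠 * e) := by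
      rcases abs_choice e with he | he <;> rw [he]
      · nlinarith [Real.exp_pos (-𝔠 * e)]
      · have : 𝔠 * -e = -𝔠 * e := by ring
        rw [this]
        nlinarith [Real.exp_pos (𝔠 * e)]
    have h3 : |e| ^ n ≤ (n.factorial : ℝ) / 𝔠 ^ n * (Real.exp (𝔠 * e) + Real.exp (-𝔠 * e)) := by
      calc |e| ^ n ≤ (n.factorial : ℝ) / 𝔠 ^ n * Real.exp (𝔠 * |e|) := h1
        _ ≤ _ := by
            apply mul_le_mul_of_nonneg_left h2 (by positivity)
    calc ENNReal.ofReal (|e| ^ n)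
        ≤ ENNReal.ofReal ((n.factorial : ℝ) / 𝔠 ^ n * (Real.exp (𝔠 * e) + Real.exp (-𝔠 * e))) :=
          ENNReal.ofReal_le_ofReal h3
      _ = ENNReal.ofReal ((n.factorial : ℝ) / 𝔠 ^ n)
            * (ENNReal.ofReal (Real.exp (𝔠 * e)) + ENNReal.ofReal (Real.exp (-𝔠 * e))) := by
          rw [ENNReal.ofReal_mul (by positivity),
            ENNReal.ofReal_add (Real.exp_nonneg _) (Real.exp_nonneg _)]
  · rw [Set.indicator_of_notMem (s := {e : ℝ | 1 < |e|}) (a := e) h, add_zero]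
    apply ENNReal.ofReal_le_ofReal
    have habs : |e| ≤ 1 := not_lt.mp h
    have h2 : e ^ 2 ≤ 1 := by
      rw [← sq_abs]
      exact pow_le_one₀ (abs_nonneg e) habs
    rw [min_eq_right h2]
    calc |e| ^ n ≤ |e| ^ 2 := pow_le_pow_of_le_one (abs_nonneg e) habs hn
      _ = e ^ 2 := sq_abs e

/-- The `n`-th absolute moment of a measure is controlled by the small-jump and
exponential-tail integrals. -/
lemma aux_lint_pow_le {𝔠 : ℝ} (h𝔠 : 0 < 𝔠) {n : ℕ} (hn : 2 ≤ n) (ν : Measure ℝ) :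
    (∫⁻ e, ENNReal.ofReal (|e| ^ n) ∂ν)
      ≤ (∫⁻ e, ENNReal.ofReal (min 1 (e ^ 2)) ∂ν)
        + ENNReal.ofReal ((n.factorial : ℝ) / 𝔠 ^ n)
          * ((∫⁻ e in {e : ℝ | 1 < |e|}, ENNReal.ofReal (Real.exp (𝔠 * e)) ∂ν)
            + ∫⁻ e in {e : ℝ | 1 < |e|}, ENNReal.ofReal (Real.exp (-𝔠 * e)) ∂ν) := by
  have hS : MeasurableSet {e : ℝ | 1 < |e|} :=
    measurableSet_lt measurable_const measurable_id.abs
  have hmin : Measurable fun e : ℝ => ENNReal.ofReal (min 1 (e ^ 2)) :=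
    (measurable_const.min (measurable_id.pow_const 2)).ennreal_ofReal
  have hep : Measurable fun e : ℝ => ENNReal.ofReal (Real.exp (𝔠 * e)) :=
    (Real.measurable_exp.comp (measurable_id.const_mul 𝔠)).ennreal_ofReal
  have hem : Measurable fun e : ℝ => ENNReal.ofReal (Real.exp (-𝔠 * e)) :=
    (Real.measurable_exp.comp (measurable_id.const_mul (-𝔠))).ennreal_ofReal
  calc (∫⁻ e, ENNReal.ofReal (|e| ^ n) ∂ν)
      ≤ ∫⁻ e, (ENNReal.ofReal (min 1 (e ^ 2))
          + Set.indicator {e : ℝ | 1 < |e|}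
              (fun e => ENNReal.ofReal ((n.factorial : ℝ) / 𝔠 ^ n)
                * (ENNReal.ofReal (Real.exp (𝔠 * e)) + ENNReal.ofReal (Real.exp (-𝔠 * e)))) e) ∂ν :=
        lintegral_mono (aux_pow_bound h𝔠 hn)
    _ = (∫⁻ e, ENNReal.ofReal (min 1 (e ^ 2)) ∂ν)
          + ∫⁻ e in {e : ℝ | 1 < |e|},
              ENNReal.ofReal ((n.factorial : ℝ) / 𝔠 ^ n)
                * (ENNReal.ofReal (Real.exp (𝔠 * e)) + ENNReal.ofReal (Real.exp (-𝔠 * e))) ∂ν := by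
        rw [lintegral_add_left hmin, lintegral_indicator hS]
    _ = _ := by
        rw [lintegral_const_mul' _ _ ENNReal.ofReal_ne_top, lintegral_add_left hep]

lemma aux_integrable_pow {𝔠 : ℝ} (h𝔠 : 0 < 𝔠) {n : ℕ} (hn : 2 ≤ n) {ν : Measure ℝ}
    (hA : (∫⁻ e, ENNReal.ofReal (min 1 (e ^ 2)) ∂ν) ≠ ⊤)
    (hBp : (∫⁻ e in {e : ℝ | 1 < |e|}, ENNReal.ofReal (Real.exp (𝔠 * e)) ∂ν) ≠ ⊤)
    (hBm : (∫⁻ e in {e : ℝ | 1 < |e|}, ENNReal.ofReal (Real.exp (-𝔠 * e)) ∂ν) ≠ ⊤) :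
    Integrable (fun e => e ^ n) ν := by
  refine ⟨(measurable_id.pow_const n).aestronglyMeasurable, ?_⟩
  rw [hasFiniteIntegral_iff_norm]
  have h : ∀ e : ℝ, ‖e ^ n‖ = |e| ^ n := fun e => by rw [Real.norm_eq_abs, abs_pow]
  simp_rw [h]
  refine lt_of_le_of_lt (aux_lint_pow_le h𝔠 hn ν) ?_
  exact ENNReal.add_lt_top.mpr ⟨hA.lt_top,
    ENNReal.mul_lt_top ENNReal.ofReal_lt_top (ENNReal.add_lt_top.mpr ⟨hBp.lt_top, hBm.lt_top⟩)⟩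

lemma aux_qPoly_zero (α : ℕ → ℕ → ℝ) {n : ℕ} (hn : 1 ≤ n) : qPoly α n 0 = α n 1 := by
  unfold qPoly
  rw [Finset.sum_eq_single 1]
  · norm_num
  · intro b hb hb1
    have hb0 : b - 1 ≠ 0 := by
      have := (Finset.mem_Icc.mp hb).1
      omega
    rw [zero_pow hb0, mul_zero]
  · intro h
    exact absurd (Finset.mem_Icc.mpr ⟨le_refl 1, hn⟩) h

/-- Strong orthogonality of the orthonormalized power-jump processes:
`⟨H^{(i)}, H^{(j)}⟩_t = ∫₀ᵗ∫ q_i q_j dπ`, which vanishes for `i ≠ j`. -/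
theorem stmt3_strong_orthogonality
    (P : Measure Ω) [IsProbabilityMeasure P]
    (T : ℝ) (hT : 0 < T) (X : NHLevy Ω P T) (hNL1 : NL1 X)
    (ε 𝔠 : ℝ) (hε : 0 < ε) (h𝔠 : 0 < 𝔠) (hNL2 : NL2 X ε 𝔠)
    (α : ℕ → ℕ → ℝ)
    -- the polynomials q_n are orthonormal in L²(π):
    (horth : ∀ n m : ℕ, 1 ≤ n → 1 ≤ m → n ≠ m → ∀ t ∈ Set.Icc (0 : ℝ) T,
      piIntegral X α n m t = 0) :
    ∀ i j : ℕ, 1 ≤ i → 1 ≤ j → ∀ t ∈ Set.Icc (0 : ℝ) T,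
      orthoBracket X P α i j t = piIntegral X α i j t ∧
      (i ≠ j → orthoBracket X P α i j t = 0) := by
  intro i j hi hj t ht
  obtain ⟨ht0, htT⟩ := ht
  have hsub : Set.Ioc (0:ℝ) t ⊆ Set.Ioc (0:ℝ) T := Set.Ioc_subset_Ioc le_rfl htT
  have hS : MeasurableSet {e : ℝ | 1 < |e|} :=
    measurableSet_lt measurable_const measurable_id.abs
  have hmin_meas : Measurable fun e : ℝ => ENNReal.ofReal (min 1 (e ^ 2)) :=
    (measurable_const.min (measurable_id.pow_const 2)).ennreal_ofReal
  have hA_meas : Measurable fun s => ∫⁻ e, ENNReal.ofReal (min 1 (e ^ 2)) ∂(X.F s) :=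
    aux_meas_lintegral X.F_meas hmin_meas
  have hexp_meas : ∀ u : ℝ, Measurable fun e : ℝ => ENNReal.ofReal (Real.exp (u * e)) :=
    fun u => (Real.measurable_exp.comp (measurable_id.const_mul u)).ennreal_ofReal
  have hB_meas : ∀ u : ℝ, Measurable fun s =>
      ∫⁻ e in {e : ℝ | 1 < |e|}, ENNReal.ofReal (Real.exp (u * e)) ∂(X.F s) :=
    fun u => aux_meas_setLintegral X.F_meas hS (hexp_meas u)
  have hmem : ∀ u : ℝ, |u| ≤ 𝔠 → u ∈ Set.Icc (-(1 + ε) * 𝔠) ((1 + ε) * 𝔠) := by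
    intro u hu
    obtain ⟨h1, h2⟩ := abs_le.mp hu
    constructor <;> nlinarith
  have hAfin : (∫⁻ s in Set.Ioc (0:ℝ) t,
      ∫⁻ e, ENNReal.ofReal (min 1 (e ^ 2)) ∂(X.F s)) ≠ ⊤ := by
    refine ne_top_of_le_ne_top hNL1.ne ?_
    exact le_trans (lintegral_mono_set hsub) (lintegral_mono fun s => le_add_self)
  have hBfin : ∀ u : ℝ, |u| ≤ 𝔠 → (∫⁻ s in Set.Ioc (0:ℝ) t,
      ∫⁻ e in {e : ℝ | 1 < |e|}, ENNReal.ofReal (Real.exp (u * e)) ∂(X.F s)) ≠ ⊤ := by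
    intro u hu
    exact ne_top_of_le_ne_top (hNL2 u (hmem u hu)).ne (lintegral_mono_set hsub)
  have h𝔠a : |𝔠| ≤ 𝔠 := by rw [abs_of_pos h𝔠]
  have hm𝔠a : |(-𝔠)| ≤ 𝔠 := by rw [abs_neg, abs_of_pos h𝔠]
  have hgood : ∀ᵐ s ∂((volume : Measure ℝ).restrict (Set.Ioc (0:ℝ) t)),
      (∫⁻ e in {e : ℝ | 1 < |e|}, ENNReal.ofReal (Real.exp (𝔠 * e)) ∂(X.F s)) ≠ ⊤ ∧
      (∫⁻ e in {e : ℝ | 1 < |e|}, ENNReal.ofReal (Real.exp (-𝔠 * e)) ∂(X.F s)) ≠ ⊤ := by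
    filter_upwards [ae_lt_top (hB_meas 𝔠) (hBfin 𝔠 h𝔠a),
      ae_lt_top (hB_meas (-𝔠)) (hBfin (-𝔠) hm𝔠a)] with s h1 h2
    exact ⟨h1.ne, h2.ne⟩
  -- integrability of `s ↦ ∫ e, e ^ n ∂(X.F s)` over `(0, t]`
  have houter : ∀ n : ℕ, 2 ≤ n → Integrable (fun s => ∫ e, e ^ n ∂(X.F s))
      ((volume : Measure ℝ).restrict (Set.Ioc (0:ℝ) t)) := by
    intro n hn
    have hint_ae : ∀ᵐ s ∂((volume : Measure ℝ).restrict (Set.Ioc (0:ℝ) t)),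
        Integrable (fun e : ℝ => e ^ n) (X.F s) := by
      filter_upwards [hgood] with s hs
      exact aux_integrable_pow h𝔠 hn (X.F_int s).ne hs.1 hs.2
    constructor
    · have hg_meas : Measurable fun s =>
          (∫⁻ e, ENNReal.ofReal (e ^ n) ∂(X.F s)).toReal
            - (∫⁻ e, ENNReal.ofReal (-(e ^ n)) ∂(X.F s)).toReal :=
        ((aux_meas_lintegral X.F_meas (measurable_id.pow_const n).ennreal_ofReal).ennreal_toReal.sub
          (aux_meas_lintegral X.F_meas ((measurable_id.pow_const n).neg.ennreal_ofReal)).ennreal_toReal)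
      refine hg_meas.aestronglyMeasurable.congr ?_
      filter_upwards [hint_ae] with s hs
      exact (integral_eq_lintegral_pos_part_sub_lintegral_neg_part hs).symm
    · rw [hasFiniteIntegral_iff_norm]
      have hbound : ∀ᵐ s ∂((volume : Measure ℝ).restrict (Set.Ioc (0:ℝ) t)),
          ENNReal.ofReal ‖∫ e, e ^ n ∂(X.F s)‖
            ≤ ∫⁻ e, ENNReal.ofReal (|e| ^ n) ∂(X.F s) := by
        filter_upwards [hgood] with s hs
        have hfin : (∫⁻ e, ENNReal.ofReal (|e| ^ n) ∂(X.F s)) ≠ ⊤ :=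
          ne_top_of_le_ne_top
            (ENNReal.add_ne_top.mpr ⟨(X.F_int s).ne,
              ENNReal.mul_ne_top ENNReal.ofReal_ne_top
                (ENNReal.add_ne_top.mpr ⟨hs.1, hs.2⟩)⟩)
            (aux_lint_pow_le h𝔠 hn (X.F s))
        have h1 : ‖∫ e, e ^ n ∂(X.F s)‖
            ≤ (∫⁻ e, ENNReal.ofReal ‖(e:ℝ) ^ n‖ ∂(X.F s)).toReal :=
          norm_integral_le_lintegral_norm _
        have habs : ∀ e : ℝ, ‖e ^ n‖ = |e| ^ n := fun e => by
          rw [Real.norm_eq_abs, abs_pow]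
        simp_rw [habs] at h1
        calc ENNReal.ofReal ‖∫ e, e ^ n ∂(X.F s)‖
            ≤ ENNReal.ofReal ((∫⁻ e, ENNReal.ofReal (|e| ^ n) ∂(X.F s)).toReal) :=
              ENNReal.ofReal_le_ofReal h1
          _ ≤ _ := ENNReal.ofReal_toReal_le
      refine lt_of_le_of_lt (lintegral_mono_ae hbound) ?_
      refine lt_of_le_of_lt (lintegral_mono fun s => aux_lint_pow_le h𝔠 hn (X.F s)) ?_
      rw [lintegral_add_left hA_meas, lintegral_const_mul' _ _ ENNReal.ofReal_ne_top,
        lintegral_add_left (hB_meas 𝔠)]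
      exact ENNReal.add_lt_top.mpr ⟨hAfin.lt_top,
        ENNReal.mul_lt_top ENNReal.ofReal_lt_top
          (ENNReal.add_lt_top.mpr ⟨(hBfin 𝔠 h𝔠a).lt_top, (hBfin (-𝔠) hm𝔠a).lt_top⟩)⟩
  -- a.e. rearrangement of the inner integral
  have hinner : ∀ᵐ s ∂((volume : Measure ℝ).restrict (Set.Ioc (0:ℝ) t)),
      (∫ e, qPoly α i e * qPoly α j e * e ^ 2 ∂(X.F s))
        = ∑ k ∈ Finset.Icc 1 i, ∑ k' ∈ Finset.Icc 1 j,
            α i k * α j k' * ∫ e, e ^ (k + k') ∂(X.F s) := by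
    filter_upwards [hgood] with s hs
    have hint : ∀ n : ℕ, 2 ≤ n → Integrable (fun e : ℝ => e ^ n) (X.F s) :=
      fun n hn => aux_integrable_pow h𝔠 hn (X.F_int s).ne hs.1 hs.2
    have hptw : ∀ e : ℝ, qPoly α i e * qPoly α j e * e ^ 2
        = ∑ k ∈ Finset.Icc 1 i, ∑ k' ∈ Finset.Icc 1 j, α i k * α j k' * e ^ (k + k') := by
      intro e
      unfold qPoly
      rw [Finset.sum_mul_sum, Finset.sum_mul]
      refine Finset.sum_congr rfl fun k hk => ?_
      rw [Finset.sum_mul]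
      refine Finset.sum_congr rfl fun k' hk' => ?_
      have hk1 := (Finset.mem_Icc.mp hk).1
      have hk'1 := (Finset.mem_Icc.mp hk').1
      have hpow : (k - 1) + ((k' - 1) + 2) = k + k' := by omega
      calc α i k * e ^ (k - 1) * (α j k' * e ^ (k' - 1)) * e ^ 2
          = α i k * α j k' * (e ^ (k - 1) * (e ^ (k' - 1) * e ^ 2)) := by ring
        _ = α i k * α j k' * e ^ (k + k') := by rw [← pow_add, ← pow_add, hpow]
    have hkk : ∀ k ∈ Finset.Icc 1 i, ∀ k' ∈ Finset.Icc 1 j, 2 ≤ k + k' := by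
      intro k hk k' hk'
      have := (Finset.mem_Icc.mp hk).1
      have := (Finset.mem_Icc.mp hk').1
      omega
    simp_rw [hptw]
    rw [integral_finset_sum _ (fun k hk => integrable_finset_sum _
      (fun k' hk' => ((hint (k + k') (hkk k hk k' hk')).const_mul _)))]
    refine Finset.sum_congr rfl fun k hk => ?_
    rw [integral_finset_sum _ (fun k' hk' => ((hint (k + k') (hkk k hk k' hk')).const_mul _))]
    exact Finset.sum_congr rfl fun k' hk' => integral_const_mul _ _
  -- main computation
  have hmain : (∫ s in Set.Ioc (0:ℝ) t, ∫ e, qPoly α i e * qPoly α j e * e ^ 2 ∂(X.F s))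
      = ∑ k ∈ Finset.Icc 1 i, ∑ k' ∈ Finset.Icc 1 j,
          α i k * α j k' * ∫ s in Set.Ioc (0:ℝ) t, ∫ e, e ^ (k + k') ∂(X.F s) := by
    have hkk : ∀ k ∈ Finset.Icc 1 i, ∀ k' ∈ Finset.Icc 1 j, 2 ≤ k + k' := by
      intro k hk k' hk'
      have := (Finset.mem_Icc.mp hk).1
      have := (Finset.mem_Icc.mp hk').1
      omega
    rw [integral_congr_ae hinner]
    rw [integral_finset_sum _ (fun k hk => integrable_finset_sum _
      (fun k' hk' => ((houter (k + k') (hkk k hk k' hk')).const_mul _)))]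
    refine Finset.sum_congr rfl fun k hk => ?_
    rw [integral_finset_sum _ (fun k' hk' => ((houter (k + k') (hkk k hk k' hk')).const_mul _))]
    exact Finset.sum_congr rfl fun k' hk' => integral_const_mul _ _
  have key : orthoBracket X P α i j t = piIntegral X α i j t := by
    unfold orthoBracket piIntegral teugelsBracket
    rw [aux_qPoly_zero α hi, aux_qPoly_zero α hj]
    simp_rw [mul_add, Finset.sum_add_distrib]
    congr 1
    · rw [Finset.sum_eq_single 1]
      · rw [Finset.sum_eq_single 1]
        · rw [if_pos ⟨rfl, rfl⟩]; ring
        · intro b hb hb1; simp [hb1]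
        · intro h; exact absurd (Finset.mem_Icc.mpr ⟨le_refl 1, hj⟩) h
      · intro b hb hb1
        apply Finset.sum_eq_zero
        intro k' _
        simp [hb1]
      · intro h; exact absurd (Finset.mem_Icc.mpr ⟨le_refl 1, hi⟩) h
    · rw [hmain]
      refine Finset.sum_congr rfl fun k hk => Finset.sum_congr rfl fun k' hk' => ?_
      unfold powerJumpMean
      have h1 : k + k' ≠ 1 := by
        have := (Finset.mem_Icc.mp hk).1
        have := (Finset.mem_Icc.mp hk').1
        omega
      rw [if_neg h1]
  exact ⟨key, fun hne => key.trans (horth i j hi hj hne t ⟨ht0, htT⟩)⟩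

end
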